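/- arXiv:2104.05558 — 9 statements merged into one kernel-verified Lean document; each statement's English description precedes it below -/
import Mathlib

section
/- Let (I, I_co) be a generalised inference system with rules I and corules I_co over a universe U, and let Ind(I ∪ I_co) denote the inductive interpretation of the union system. If a set X ⊆ U is I-consistent (every judgement in X is the conclusion of some rule in I whose premises are all in X) and X ⊆ Ind(I ∪ I_co), then X is contained in the interpretation of (I, I_co), i.e., every judgement in X has a (possibly infinite) derivation in I all of whose nodes have a well-founded derivation in I ∪ I_co. -/
/-- An inference system over a universe `U` is a set of rules `(P, c)` with a
    set of premises `P ⊆ U` and a conclusion `c ∈ U`. `X` is closed if it is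
    closed under all rules. -/
def RuleClosed {U : Type} (I : Set (Set U × U)) (X : Set U) : Prop :=
  ∀ P c, (P, c) ∈ I → P ⊆ X → c ∈ X

/-- `X` is consistent: every judgement of `X` is the conclusion of a rule whose
    premises are all in `X`. -/
def RuleConsistent {U : Type} (I : Set (Set U × U)) (X : Set U) : Prop :=
  ∀ c ∈ X, ∃ (P : Set U), (P, c) ∈ I ∧ P ⊆ X

/-- Inductive interpretation: the least closed subset. -/
def IndInterp {U : Type} (I : Set (Set U × U)) : Set U := ⋂₀ {X | RuleClosed I X}

/-- Coinductive interpretation: the largest consistent subset. -/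
def CoIndInterp {U : Type} (I : Set (Set U × U)) : Set U := ⋃₀ {X | RuleConsistent I X}

/-- The restriction of `I` to rules with conclusion in `X`. -/
def RestrictTo {U : Type} (I : Set (Set U × U)) (X : Set U) : Set (Set U × U) :=
  {r ∈ I | r.2 ∈ X}

/-- Interpretation of the generalised inference system `(I, Ico)`:
    judgements with a (possibly infinite) derivation in `I` all of whose nodes
    have a well-founded derivation in `I ∪ Ico`. -/
def GenInterp {U : Type} (I Ico : Set (Set U × U)) : Set U :=
  CoIndInterp (RestrictTo I (IndInterp (I ∪ Ico)))

/-- Bounded coinduction: if `X` is `I`-consistent and contained in the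
    inductive interpretation of `I ∪ Ico`, then `X` is contained in the
    interpretation of the generalised inference system `(I, Ico)`. -/
theorem bounded_coinduction {U : Type} (I Ico : Set (Set U × U)) (X : Set U)
    (hcons : RuleConsistent I X) (hbound : X ⊆ IndInterp (I ∪ Ico)) :
    X ⊆ GenInterp I Ico := by
  intro x hx
  refine ⟨X, ?_, hx⟩
  intro c hc
  obtain ⟨P, hP, hPX⟩ := hcons c hc
  exact ⟨P, ⟨hP, hbound hc⟩, hPX⟩
end

section
/- In any partial evaluation tree t, for each natural number n there is at most one node α in the domain of t with |α| = n whose judgement is incomplete (has result '?'). -/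
/-- Judgements over configurations `C` and extended results `Option R`
    (`none` stands for the special extra result such as `?`, `wrong`, or `∞`). -/
abbrev Judg (C R : Type) := C × Option R

/-- Lift a complete judgement to an extended judgement. -/
def liftJ {C R : Type} (j : C × R) : Judg C R := (j.1, some j.2)

/-- Bounded-premises condition. -/
def BP {C R : Type} (Rules : Set (List (C × R) × (C × R))) : Prop :=
  ∀ c : C, ∃ b : ℕ, ∀ js res, (js, (c, res)) ∈ Rules → js.length ≤ b

/-- The extended rule set `Rules_?`: original rules (lifted), start axioms
    `c ⇒ ?`, and partial rules. -/
def RulesQ {C R : Type} (Rules : Set (List (C × R) × (C × R))) :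
    Set (List (Judg C R) × Judg C R) :=
  { r | (∃ c : C, r = ([], (c, none)))
      ∨ (∃ (js : List (C × R)) (c : C) (res : R), (js, (c, res)) ∈ Rules ∧ r = (js.map liftJ, (c, some res)))
      ∨ (∃ (js : List (C × R)) (c : C) (res : R) (i : ℕ) (hi : i < js.length) (u : Option R),
          (js, (c, res)) ∈ Rules ∧
          r = ((js.take i).map liftJ ++ [((js[i]'hi).1, u)], (c, none))) }

/-- Ordered trees labelled in `L`: partial functions from positions (lists of
    child indices) to labels, with nonempty, prefix-closed,
    sibling-downward-closed domain. -/
structure OTree (L : Type) where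
  label : List ℕ → Option L
  root_isSome : (label []).isSome
  pref : ∀ α n, (label (α ++ [n])).isSome → (label α).isSome
  sib : ∀ α n k, (label (α ++ [n])).isSome → k ≤ n → (label (α ++ [k])).isSome

/-- A tree is an evaluation tree in a rule set: at every node, the ordered
    children labels together with the node label form a rule. -/
def IsTreeIn {L : Type} (Rules : Set (List L × L)) (t : OTree L) : Prop :=
  ∀ α l, t.label α = some l →
    ∃ ps : List L, (∀ i : ℕ, t.label (α ++ [i]) = ps[i]?) ∧ (ps, l) ∈ Rules

/-- Partial evaluation trees: evaluation trees in `Rules_?`. -/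
def IsPET {C R : Type} (Rules : Set (List (C × R) × (C × R)))
    (t : OTree (Judg C R)) : Prop :=
  IsTreeIn (RulesQ Rules) t

/-- The refinement relation `⊑` on trees labelled by possibly-incomplete
    judgements. -/
def TreeLE {C R : Type} (t t' : OTree (Judg C R)) : Prop :=
  (∀ α, (t.label α).isSome → (t'.label α).isSome) ∧
  ∀ α c u, t.label α = some (c, u) →
    (∃ (u' : Option R), t'.label α = some (c, u')) ∧
    (u.isSome → ∀ β, t.label (α ++ β) = t'.label (α ++ β))

/-- Strict refinement `⊏`. -/
def TreeLT {C R : Type} (t t' : OTree (Judg C R)) : Prop :=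
  TreeLE t t' ∧ t ≠ t'

/-- A tree is finite if its domain is finite. -/
def TreeFinite {L : Type} (t : OTree L) : Prop :=
  Set.Finite {α | (t.label α).isSome}

/-- Well-formedness: every subtree rooted at a complete node is finite. -/
def WellFormed {C R : Type} (t : OTree (Judg C R)) : Prop :=
  ∀ α c r, t.label α = some (c, some r) →
    Set.Finite {β | (t.label (α ++ β)).isSome}

/-- `t` is a least upper bound of the sequence `f` w.r.t. `⊑`. -/
def IsLubSeq {C R : Type} (f : ℕ → OTree (Judg C R)) (t : OTree (Judg C R)) : Prop :=
  (∀ n, TreeLE (f n) t) ∧ ∀ t', (∀ n, TreeLE (f n) t') → TreeLE t t'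

/-- Inductive derivability in a rule set with finite-list premises. -/
inductive IndDerives {J : Type} (Rules : Set (List J × J)) : J → Prop where
  | node (ps : List J) (j : J) : (ps, j) ∈ Rules →
      (∀ p ∈ ps, IndDerives Rules p) → IndDerives Rules j

/-- A set of judgements is consistent w.r.t. a rule set. -/
def ConsistentL {J : Type} (Rules : Set (List J × J)) (X : Set J) : Prop :=
  ∀ j ∈ X, ∃ (ps : List J), (ps, j) ∈ Rules ∧ ∀ p ∈ ps, p ∈ X

/-- Coinductive derivability: membership in some consistent set. -/
def CoDerives {J : Type} (Rules : Set (List J × J)) (j : J) : Prop :=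
  ∃ (X : Set J), ConsistentL Rules X ∧ j ∈ X

/-- Derivability in a generalised inference system (rules + corules):
    membership in a consistent set all of whose elements have a finite
    derivation using both rules and corules. -/
def GenDerives {J : Type} (rules corules : Set (List J × J)) (j : J) : Prop :=
  ∃ (X : Set J), ConsistentL rules X ∧ (∀ x ∈ X, IndDerives (rules ∪ corules) x) ∧ j ∈ X

/-- Helper: an incomplete child has an incomplete parent, and it is the unique
    incomplete child of that parent. -/
lemma pet_child_none {C R : Type}
    (Rules : Set (List (C × R) × (C × R))) (t : OTree (Judg C R))
    (hpet : IsPET Rules t) (γ : List ℕ) (k : ℕ) (c : C)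
    (h : t.label (γ ++ [k]) = some (c, none)) :
    ∃ c'' : C, t.label γ = some (c'', none) ∧
      ∀ l (c' : C), t.label (γ ++ [l]) = some (c', (none : Option R)) → l = k := by
  have hsome : (t.label γ).isSome := t.pref γ k (by rw [h]; rfl)
  obtain ⟨⟨c0, u0⟩, hl0⟩ := Option.isSome_iff_exists.mp hsome
  obtain ⟨ps, hch, hrule⟩ := hpet γ (c0, u0) hl0
  have hk : ps[k]? = some (c, none) := by rw [← hch k, h]
  have hklt : k < ps.length := by
    by_contra hc
    rw [List.getElem?_eq_none (le_of_not_gt hc)] at hk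
    exact absurd hk (by simp)
  have hkval : ps[k] = (c, none) := by
    rw [List.getElem?_eq_getElem hklt] at hk
    exact Option.some.inj hk
  rcases hrule with ⟨c1, heq⟩ | ⟨js, c1, res, hmem, heq⟩ |
      ⟨js, c1, res, i, hi, u, hmem, heq⟩
  · -- axiom: no children
    have hps : ps = [] := congrArg Prod.fst heq
    subst hps
    simp at hklt
  · -- lifted rule: all children complete
    have hps : ps = js.map liftJ := congrArg Prod.fst heq
    subst hps
    simp only [List.getElem_map, liftJ] at hkval
    exact absurd (congrArg Prod.snd hkval) (by simp)
  · -- partial rule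
    have hps : ps = (js.take i).map liftJ ++ [((js[i]'hi).1, u)] :=
      congrArg Prod.fst heq
    subst hps
    have hconc : (c0, u0) = (c1, none) := congrArg Prod.snd heq
    have hu0 : u0 = none := congrArg Prod.snd hconc
    have hlen : ((js.take i).map liftJ ++ [((js[i]'hi).1, u)]).length = i + 1 := by
      simp [List.length_take, Nat.min_eq_left (le_of_lt hi)]
    -- any index with an incomplete label equals i
    have huniq : ∀ l (c' : C), t.label (γ ++ [l]) = some (c', (none : Option R)) → l = i := by
      intro l c' hl
      have hl' : ((js.take i).map liftJ ++ [((js[i]'hi).1, u)])[l]? = some (c', none) := by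
        rw [← hch l, hl]
      have hllt : l < ((js.take i).map liftJ ++ [((js[i]'hi).1, u)]).length := by
        by_contra hc
        rw [List.getElem?_eq_none (le_of_not_gt hc)] at hl'
        exact absurd hl' (by simp)
      have hlval : ((js.take i).map liftJ ++ [((js[i]'hi).1, u)])[l] = (c', none) := by
        rw [List.getElem?_eq_getElem hllt] at hl'
        exact Option.some.inj hl'
      by_contra hne
      have hlt : l < i := by omega
      have : ((js.take i).map liftJ ++ [((js[i]'hi).1, u)])[l] =
          liftJ ((js.take i)[l]'(by simp [List.length_take]; omega)) := by
        rw [List.getElem_append_left (by simp [List.length_take]; omega)]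
        simp
      rw [hlval] at this
      exact absurd (congrArg Prod.snd this).symm (by simp [liftJ])
    have hki : k = i := huniq k c h
    refine ⟨c0, by rw [hl0, hu0], ?_⟩
    intro l c' hl
    rw [huniq l c' hl, hki]

/-- in any partial evaluation tree, for each `n` there is at most
    one node of depth `n` whose judgement is incomplete. -/
theorem pet_incomplete_unique {C R : Type}
    (Rules : Set (List (C × R) × (C × R))) (t : OTree (Judg C R))
    (hpet : IsPET Rules t) (n : ℕ) (α β : List ℕ)
    (hα : α.length = n) (hβ : β.length = n) (c c' : C)
    (h1 : t.label α = some (c, none)) (h2 : t.label β = some (c', none)) :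
    α = β := by
  induction n generalizing α β c c' with
  | zero =>
    rw [List.length_eq_zero_iff] at hα hβ
    rw [hα, hβ]
  | succ m ih =>
    rcases List.eq_nil_or_concat α with rfl | ⟨γ, k, rfl⟩
    · simp at hα
    rcases List.eq_nil_or_concat β with rfl | ⟨δ, l, rfl⟩
    · simp at hβ
    simp only [List.concat_eq_append] at *
    obtain ⟨c1, hc1, huniq1⟩ := pet_child_none Rules t hpet γ k c h1
    obtain ⟨c2, hc2, _⟩ := pet_child_none Rules t hpet δ l c' h2
    have hγ : γ.length = m := by simp at hα; omega
    have hδ : δ.length = m := by simp at hβ; omega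
    have hγδ : γ = δ := ih γ δ hγ hδ c1 c2 hc1 hc2
    subst hγδ
    rw [huniq1 l c' h2]
end

section
/- Every increasing (with respect to ⊑) sequence (t_n) of trees labelled by possibly-incomplete judgements has a least upper bound with respect to ⊑. -/
lemma treeLE_refl {C R : Type} (t : OTree (Judg C R)) : TreeLE t t :=
  ⟨fun _ h => h, fun _ _ u h => ⟨⟨u, h⟩, fun _ _ => rfl⟩⟩

lemma treeLE_trans {C R : Type} {t₁ t₂ t₃ : OTree (Judg C R)}
    (h12 : TreeLE t₁ t₂) (h23 : TreeLE t₂ t₃) : TreeLE t₁ t₃ := by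
  obtain ⟨h1, h2⟩ := h12
  obtain ⟨g1, g2⟩ := h23
  refine ⟨fun α h => g1 α (h1 α h), fun α c u h => ?_⟩
  obtain ⟨⟨u', hu'⟩, hfr⟩ := h2 α c u h
  obtain ⟨⟨u'', hu''⟩, hfr'⟩ := g2 α c u' hu'
  refine ⟨⟨u'', hu''⟩, fun hs β => ?_⟩
  have e0 := hfr hs []
  simp only [List.append_nil] at e0
  have huu : u' = u := by
    rw [h, hu'] at e0
    exact (congrArg Prod.snd (Option.some_injective _ e0)).symm
  have hs' : u'.isSome := huu ▸ hs
  exact (hfr hs β).trans (hfr' hs' β)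

lemma treeLE_mono {C R : Type} {f : ℕ → OTree (Judg C R)}
    (hmono : ∀ n, TreeLE (f n) (f (n + 1))) :
    ∀ m n, m ≤ n → TreeLE (f m) (f n) := by
  intro m n hmn
  induction n, hmn using Nat.le_induction with
  | base => exact treeLE_refl _
  | succ n hmn ih => exact treeLE_trans ih (hmono n)

/-- The candidate label function of the least upper bound. -/
noncomputable def lubLabel {C R : Type} (f : ℕ → OTree (Judg C R))
    (α : List ℕ) : Option (Judg C R) := by
  classical
  exact if h : ∃ (n : ℕ) (c : C) (r : R), (f n).label α = some (c, some r) then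
    (f h.choose).label α
  else if h2 : ∃ n, ((f n).label α).isSome then (f h2.choose).label α
  else none

lemma lubLabel_isSome_iff {C R : Type} (f : ℕ → OTree (Judg C R)) (α : List ℕ) :
    (lubLabel f α).isSome ↔ ∃ n, ((f n).label α).isSome := by
  rw [lubLabel]
  split_ifs with h1 h2
  · constructor
    · intro hs; exact ⟨h1.choose, hs⟩
    · intro _
      obtain ⟨c, r, hcr⟩ := h1.choose_spec
      simp [hcr]
  · exact ⟨fun hs => ⟨h2.choose, hs⟩, fun _ => h2.choose_spec⟩
  · simp [h2]

lemma lubLabel_stable {C R : Type} {f : ℕ → OTree (Judg C R)}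
    (hmono : ∀ n, TreeLE (f n) (f (n + 1))) (α : List ℕ) (c : C) (u : Option R)
    (h : lubLabel f α = some (c, u)) :
    ∃ N, ∀ m, N ≤ m → (f m).label α = some (c, u) := by
  rw [lubLabel] at h
  split_ifs at h with h1 h2
  · refine ⟨h1.choose, fun m hm => ?_⟩
    obtain ⟨c', r', hcr⟩ := h1.choose_spec
    rw [h] at hcr
    have heq := Option.some_injective _ hcr
    have hus : u.isSome := by
      rw [show u = some r' from congrArg Prod.snd heq]; rfl
    have hle := treeLE_mono hmono _ _ hm
    have hfr := (hle.2 α c u h).2 hus []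
    simp only [List.append_nil] at hfr
    rw [← hfr, h]
  · refine ⟨h2.choose, fun m hm => ?_⟩
    have hle := treeLE_mono hmono _ _ hm
    obtain ⟨⟨u', hu'⟩, _⟩ := hle.2 α c u h
    have hun : u = none := by
      cases u with
      | none => rfl
      | some r => exact absurd ⟨h2.choose, c, r, h⟩ h1
    have hun' : u' = none := by
      cases u' with
      | none => rfl
      | some r => exact absurd ⟨m, c, r, hu'⟩ h1
    simp [hu', hun, hun']

lemma lubLabel_subtree_eq {C R : Type} {f : ℕ → OTree (Judg C R)}
    (hmono : ∀ n, TreeLE (f n) (f (n + 1))) {n : ℕ} {α : List ℕ} {c : C} {r : R}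
    (h : (f n).label α = some (c, some r)) :
    ∀ β, lubLabel f (α ++ β) = (f n).label (α ++ β) := by
  intro β
  cases hl : lubLabel f (α ++ β) with
  | none =>
    have : ¬ ∃ m, ((f m).label (α ++ β)).isSome := by
      rw [← lubLabel_isSome_iff, hl]; simp
    cases hfn : (f n).label (α ++ β) with
    | none => rfl
    | some l => exact absurd ⟨n, by simp [hfn]⟩ this
  | some l =>
    obtain ⟨c', u'⟩ := l
    obtain ⟨N, hN⟩ := lubLabel_stable hmono _ _ _ hl
    have hM := hN (max n N) (le_max_right _ _)
    have hle := treeLE_mono hmono n (max n N) (le_max_left _ _)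
    have := (hle.2 α c (some r) h).2 rfl β
    rw [this, hM]

/-- every `⊑`-increasing sequence of trees labelled by possibly
    incomplete judgements has a least upper bound. -/
theorem increasing_seq_has_lub {C R : Type} (f : ℕ → OTree (Judg C R))
    (hmono : ∀ n, TreeLE (f n) (f (n + 1))) :
    ∃ t : OTree (Judg C R), IsLubSeq f t := by
  refine ⟨⟨lubLabel f, ?_, ?_, ?_⟩, ?_, ?_⟩
  · rw [lubLabel_isSome_iff]
    exact ⟨0, (f 0).root_isSome⟩
  · intro α n hs
    rw [lubLabel_isSome_iff] at hs ⊢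
    obtain ⟨m, hm⟩ := hs
    exact ⟨m, (f m).pref α n hm⟩
  · intro α n k hs hk
    rw [lubLabel_isSome_iff] at hs ⊢
    obtain ⟨m, hm⟩ := hs
    exact ⟨m, (f m).sib α n k hm hk⟩
  · -- upper bound
    intro n
    refine ⟨fun α hs => (lubLabel_isSome_iff f α).2 ⟨n, hs⟩, ?_⟩
    intro α c u h
    constructor
    · have hs : (lubLabel f α).isSome := (lubLabel_isSome_iff f α).2 ⟨n, by simp [h]⟩
      obtain ⟨⟨c₀, u₀⟩, hl⟩ := Option.isSome_iff_exists.mp hs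
      obtain ⟨N, hN⟩ := lubLabel_stable hmono α c₀ u₀ hl
      have hM := hN (max n N) (le_max_right _ _)
      have hle := treeLE_mono hmono n (max n N) (le_max_left _ _)
      obtain ⟨⟨u'', hu''⟩, _⟩ := hle.2 α c u h
      rw [hM] at hu''
      have : c₀ = c := congrArg Prod.fst (Option.some_injective _ hu'')
      exact ⟨u₀, show lubLabel f α = _ by rw [hl, this]⟩
    · intro hs β
      obtain ⟨r, rfl⟩ := Option.isSome_iff_exists.mp hs
      exact (lubLabel_subtree_eq hmono h β).symm
  · -- least
    intro t' ht'
    constructor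
    · intro α hs
      rw [lubLabel_isSome_iff] at hs
      obtain ⟨n, hn⟩ := hs
      exact (ht' n).1 α hn
    · intro α c u h
      obtain ⟨N, hN⟩ := lubLabel_stable hmono α c u h
      have hNα := hN N le_rfl
      obtain ⟨⟨u', hu'⟩, hfr⟩ := (ht' N).2 α c u hNα
      refine ⟨⟨u', hu'⟩, fun hs β => ?_⟩
      obtain ⟨r, rfl⟩ := Option.isSome_iff_exists.mp hs
      show lubLabel f (α ++ β) = _
      rw [lubLabel_subtree_eq hmono hNα β]
      exact hfr rfl β
end

section
/- For any increasing sequence (t_n) of partial evaluation trees of a big-step semantics satisfying the bounded-premises condition, the least upper bound ⊔ t_n is again a partial evaluation tree. -/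
lemma treeLE_trans_s6 {C R : Type} {a b c : OTree (Judg C R)}
    (h1 : TreeLE a b) (h2 : TreeLE b c) : TreeLE a c := by
  refine ⟨fun α h => h2.1 α (h1.1 α h), fun α co u hα => ?_⟩
  obtain ⟨⟨u', hu'⟩, hfr⟩ := h1.2 α co u hα
  obtain ⟨⟨u'', hu''⟩, hfr'⟩ := h2.2 α co u' hu'
  refine ⟨⟨u'', hu''⟩, fun hs β => ?_⟩
  have h0 : b.label α = some (co, u) := by
    have := hfr hs []; rw [List.append_nil] at this; rw [← this, hα]
  have hu : u' = u := by rw [h0] at hu'; injection hu' with h; injection h with _ h2; exact h2.symm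
  exact (hfr hs β).trans (hfr' (by rw [hu]; exact hs) β)

def lubTree {C R : Type} (f : ℕ → OTree (Judg C R)) (N : List ℕ → ℕ)
    (hN : ∀ α m, N α ≤ m → (f m).label α = (f (N α)).label α) :
    OTree (Judg C R) where
  label := fun α => (f (N α)).label α
  root_isSome := by
    have h := (f (max (N []) (N []))).root_isSome
    rw [hN [] _ (le_max_left _ _)] at h
    exact h
  pref := by
    intro α n h
    have h1 : (f (max (N (α ++ [n])) (N α))).label (α++[n]) = (f (N (α++[n]))).label (α++[n]) :=
      hN _ _ (le_max_left _ _)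
    have h2 : (f (max (N (α ++ [n])) (N α))).label α = (f (N α)).label α :=
      hN _ _ (le_max_right _ _)
    show ((f (N α)).label α).isSome
    rw [← h2]
    exact (f _).pref α n (by rw [h1]; exact h)
  sib := by
    intro α n k h hk
    have h1 : (f (max (N (α ++ [n])) (N (α ++ [k])))).label (α++[n]) = (f (N (α++[n]))).label (α++[n]) :=
      hN _ _ (le_max_left _ _)
    have h2 : (f (max (N (α ++ [n])) (N (α ++ [k])))).label (α++[k]) = (f (N (α++[k]))).label (α++[k]) :=
      hN _ _ (le_max_right _ _)
    show ((f (N (α ++ [k]))).label (α ++ [k])).isSome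
    rw [← h2]
    exact (f _).sib α n k (by rw [h1]; exact h) hk

/-- the least upper bound of an increasing sequence of partial
    evaluation trees of a big-step semantics with bounded premises is a
    partial evaluation tree. -/
theorem lub_isPET {C R : Type} (Rules : Set (List (C × R) × (C × R)))
    (hbp : BP Rules) (f : ℕ → OTree (Judg C R))
    (hpet : ∀ n, IsPET Rules (f n)) (hmono : ∀ n, TreeLE (f n) (f (n + 1)))
    (t : OTree (Judg C R)) (hlub : IsLubSeq f t) :
    IsPET Rules t := by
  -- the sequence is a chain
  have hchain : ∀ m n, m ≤ n → TreeLE (f m) (f n) := by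
    intro m n h
    induction n, h using Nat.le_induction with
    | base => exact treeLE_refl _
    | succ n hmn ih => exact treeLE_trans_s6 ih (hmono n)
  -- labels stabilize at every position
  have hstab : ∀ α : List ℕ, ∃ n, ∀ m, n ≤ m → (f m).label α = (f n).label α := by
    intro α
    by_cases h : ∃ n c r, (f n).label α = some (c, some r)
    · obtain ⟨n, c, r, hn⟩ := h
      refine ⟨n, fun m hm => ?_⟩
      have := ((hchain n m hm).2 α c (some r) hn).2 (by simp) []
      rw [List.append_nil] at this
      exact this.symm
    · by_cases h2 : ∃ n, ((f n).label α).isSome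
      · obtain ⟨n, hn⟩ := h2
        obtain ⟨⟨c, u⟩, hcu⟩ := Option.isSome_iff_exists.mp hn
        have hu : u = none := by
          cases u with
          | none => rfl
          | some r => exact absurd ⟨n, c, r, hcu⟩ h
        refine ⟨n, fun m hm => ?_⟩
        obtain ⟨⟨u', hu'⟩, _⟩ := (hchain n m hm).2 α c u hcu
        have hu'' : u' = none := by
          cases u' with
          | none => rfl
          | some r => exact absurd ⟨m, c, r, hu'⟩ h
        rw [hu', hcu, hu, hu'']
      · push_neg at h2
        refine ⟨0, fun m _ => ?_⟩
        have a : (f m).label α = none := Option.not_isSome_iff_eq_none.mp (h2 m)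
        have b : (f 0).label α = none := Option.not_isSome_iff_eq_none.mp (h2 0)
        rw [a, b]
  choose N hN using hstab
  have hN' : ∀ (α : List ℕ) (m : ℕ), N α ≤ m → (f m).label α = (f (N α)).label α := hN
  set T : OTree (Judg C R) := lubTree f N hN' with hTdef
  have hTl : ∀ α, T.label α = (f (N α)).label α := fun _ => rfl
  -- T is an upper bound
  have hub : ∀ n, TreeLE (f n) T := by
    intro n
    constructor
    · intro α h
      have := (hchain n (max n (N α)) (le_max_left _ _)).1 α h
      rw [hN' α _ (le_max_right _ _)] at this
      rw [hTl]
      exact this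
    · intro α c u hα
      obtain ⟨⟨u', hu'⟩, _⟩ := (hchain n (max n (N α)) (le_max_left _ _)).2 α c u hα
      rw [hN' α _ (le_max_right _ _)] at hu'
      refine ⟨⟨u', by rw [hTl]; exact hu'⟩, fun hs β => ?_⟩
      have := ((hchain n (max n (N (α ++ β))) (le_max_left _ _)).2 α c u hα).2 hs β
      rw [hN' (α ++ β) _ (le_max_right _ _)] at this
      rw [hTl]
      exact this
  -- T is below every upper bound
  have hleast : ∀ t', (∀ n, TreeLE (f n) t') → TreeLE T t' := by
    intro t' hup
    constructor
    · intro α h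
      rw [hTl] at h
      exact (hup (N α)).1 α h
    · intro α c u hα
      rw [hTl] at hα
      obtain ⟨⟨u', hu'⟩, hfr⟩ := (hup (N α)).2 α c u hα
      refine ⟨⟨u', hu'⟩, fun hs β => ?_⟩
      have hfz := ((hchain (N α) (max (N α) (N (α ++ β))) (le_max_left _ _)).2 α c u hα).2 hs β
      have h2 : (f (max (N α) (N (α ++ β)))).label (α ++ β) = (f (N (α ++ β))).label (α ++ β) :=
        hN' _ _ (le_max_right _ _)
      rw [hTl, ← h2, ← hfz]
      exact hfr hs β
  -- antisymmetry: t has the same labels as T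
  have h1 : TreeLE t T := hlub.2 T hub
  have h2 : TreeLE T t := hleast t hlub.1
  have hlabel : ∀ α, t.label α = T.label α := by
    intro α
    cases ht : t.label α with
    | none =>
      cases hT' : T.label α with
      | none => rfl
      | some v =>
        have hs : (t.label α).isSome := h2.1 α (by rw [hT']; rfl)
        rw [ht] at hs
        simp at hs
    | some v =>
      obtain ⟨c, u⟩ := v
      obtain ⟨⟨u', hu'⟩, hfr⟩ := h1.2 α c u ht
      cases u with
      | some r =>
        have := hfr (by simp) []
        rw [List.append_nil, ht] at this
        exact this
      | none =>
        cases u' with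
        | none => exact hu'.symm
        | some r =>
          obtain ⟨⟨u'', hu''⟩, hfr'⟩ := h2.2 α c (some r) hu'
          have := hfr' (by simp) []
          rw [List.append_nil, hu', ht] at this
          simp at this
  -- main argument
  intro α l hl
  obtain ⟨c, u⟩ := l
  rw [hlabel α, hTl] at hl
  obtain ⟨b, hb⟩ := hbp c
  -- every rule of RulesQ concluding at configuration c has at most b premises
  have hlen : ∀ (qs : List (Judg C R)) (u0 : Option R),
      (qs, ((c : C), u0)) ∈ RulesQ Rules → qs.length ≤ b := by
    intro qs u0 hq
    rcases hq with ⟨c', he⟩ | ⟨js, c', res, hmem, he⟩ | ⟨js, c', res, i, hi, u1, hmem, he⟩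
    · simp only [Prod.mk.injEq] at he
      rw [he.1]
      simp
    · simp only [Prod.mk.injEq] at he
      obtain ⟨hq1, hc, _⟩ := he
      subst hc
      rw [hq1, List.length_map]
      exact hb js res hmem
    · simp only [Prod.mk.injEq] at he
      obtain ⟨hq1, hc, _⟩ := he
      subst hc
      have hjb := hb js res hmem
      rw [hq1]
      simp only [List.length_append, List.length_map, List.length_take, List.length_singleton]
      omega
  -- the children of α in T are bounded
  have hchild : ∀ i : ℕ, ((f (N (α ++ [i]))).label (α ++ [i])).isSome → i < b + 1 := by
    intro i hi
    have hMα : (f (max (N α) (N (α ++ [i])))).label α = (f (N α)).label α :=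
      hN' _ _ (le_max_left _ _)
    have hMi : (f (max (N α) (N (α ++ [i])))).label (α ++ [i]) = (f (N (α ++ [i]))).label (α ++ [i]) :=
      hN' _ _ (le_max_right _ _)
    obtain ⟨qs, hq, hr⟩ := hpet (max (N α) (N (α ++ [i]))) α (c, u) (by rw [hMα, hl])
    have hsome : (qs[i]?).isSome := by rw [← hq i, hMi]; exact hi
    have : i < qs.length := by
      obtain ⟨a, ha⟩ := Option.isSome_iff_exists.mp hsome
      exact (List.getElem?_eq_some_iff.mp ha).1
    have := hlen qs u hr
    omega
  -- find the width k of the node α in T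
  have hex : ∃ i, ¬ ((f (N (α ++ [i]))).label (α ++ [i])).isSome :=
    ⟨b + 1, fun h => lt_irrefl _ (hchild _ h)⟩
  set k := Nat.find hex with hk
  have hknone : (f (N (α ++ [k]))).label (α ++ [k]) = none :=
    Option.not_isSome_iff_eq_none.mp (Nat.find_spec hex)
  have hge : ∀ i, k ≤ i → (f (N (α ++ [i]))).label (α ++ [i]) = none := by
    intro i hki
    by_contra h
    have hi : (T.label (α ++ [i])).isSome := by
      rw [hTl]
      exact Option.ne_none_iff_isSome.mp h
    have := T.sib α i k hi hki
    rw [hTl, hknone] at this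
    simp at this
  -- a stage where the whole rule at α has stabilized
  set M := max (N α) ((Finset.range (k + 1)).sup fun i => N (α ++ [i])) with hM
  have hMα : (f M).label α = (f (N α)).label α := hN' _ _ (le_max_left _ _)
  have hMi : ∀ i, i ≤ k → (f M).label (α ++ [i]) = (f (N (α ++ [i]))).label (α ++ [i]) := by
    intro i hik
    have hle : N (α ++ [i]) ≤ (Finset.range (k + 1)).sup fun j => N (α ++ [j]) :=
      Finset.le_sup (f := fun j => N (α ++ [j])) (Finset.mem_range.mpr (Nat.lt_succ_of_le hik))
    exact hN' _ _ (hle.trans (le_max_right _ _))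
  obtain ⟨qs, hq, hr⟩ := hpet M α (c, u) (by rw [hMα]; exact hl)
  have hqlen : qs.length ≤ k := by
    have hqk := hq k
    rw [hMi k le_rfl, hknone] at hqk
    exact List.getElem?_eq_none_iff.mp hqk.symm
  refine ⟨qs, fun i => ?_, hr⟩
  rw [hlabel (α ++ [i]), hTl]
  rcases le_or_gt i k with hik | hik
  · rw [← hMi i hik]
    exact hq i
  · rw [hge i hik.le]
    exact (List.getElem?_eq_none_iff.mpr (by omega)).symm
end

section
/- If t is a well-formed infinite partial evaluation tree, then for every natural number n there exists a node α in the domain of t with |α| = n whose judgement is incomplete (has result '?'). -/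
lemma label_pref {L : Type} (t : OTree L) (γ : List ℕ) :
    ∀ δ, (t.label (γ ++ δ)).isSome → (t.label γ).isSome := by
  intro δ
  induction δ using List.reverseRecOn with
  | nil => simp
  | append_singleton δ n ih =>
    intro h
    exact ih (t.pref (γ ++ δ) n (by rwa [← List.append_assoc] at h))

/-- a well-formed infinite partial evaluation tree has an
    incomplete node at every depth. -/
theorem wf_infinite_has_incomplete_at_every_depth {C R : Type}
    (Rules : Set (List (C × R) × (C × R))) (t : OTree (Judg C R))
    (hpet : IsPET Rules t) (hwf : WellFormed t) (hinf : ¬ TreeFinite t) :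
    ∀ n : ℕ, ∃ (α : List ℕ) (c : C), α.length = n ∧ t.label α = some (c, none) := by
  have h : ∀ n : ℕ, ∃ (α : List ℕ) (c : C), α.length = n ∧
      t.label α = some (c, none) ∧ ¬ Set.Finite {β | (t.label (α ++ β)).isSome} := ?_
  · intro n; obtain ⟨α, c, h1, h2, _⟩ := h n; exact ⟨α, c, h1, h2⟩
  intro n
  induction n with
  | zero =>
    obtain ⟨⟨c, u⟩, hc⟩ := Option.isSome_iff_exists.mp t.root_isSome
    cases u with
    | some r =>
      exact absurd (by simpa [TreeFinite] using hwf [] c r hc) hinf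
    | none =>
      refine ⟨[], c, rfl, hc, ?_⟩
      simpa [TreeFinite] using hinf
  | succ n ih =>
    obtain ⟨α, c, hlen, hlab, hinfα⟩ := ih
    obtain ⟨ps, hch, hr⟩ := hpet α _ hlab
    by_cases hall : ∀ i < ps.length, Set.Finite {β | (t.label (α ++ [i] ++ β)).isSome}
    · exfalso; apply hinfα
      have hsub : {β | (t.label (α ++ β)).isSome} ⊆
          insert [] (⋃ i ∈ Finset.range ps.length,
            (List.cons i) '' {β | (t.label (α ++ [i] ++ β)).isSome}) := by
        intro β hβ
        cases β with
        | nil => exact Set.mem_insert _ _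
        | cons i β' =>
          right
          have h1 : (t.label ((α ++ [i]) ++ β')).isSome := by
            simpa [List.append_assoc] using hβ
          have h2 : (t.label (α ++ [i])).isSome := label_pref t _ _ h1
          have hi : i < ps.length := by
            rw [hch i] at h2
            by_contra hlt
            rw [List.getElem?_eq_none (le_of_not_gt hlt)] at h2
            simp at h2
          exact Set.mem_biUnion (Finset.mem_range.mpr hi) ⟨β', h1, rfl⟩
      refine Set.Finite.subset ?_ hsub
      refine Set.Finite.insert _ ?_
      refine Set.Finite.biUnion (Finset.range ps.length).finite_toSet ?_
      intro i hi
      exact (hall i (Finset.mem_range.mp hi)).image _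
    · push_neg at hall
      obtain ⟨i, hi, hinfi⟩ := hall
      have hlabi : t.label (α ++ [i]) = some (ps[i]'hi) := by
        rw [hch i]; exact List.getElem?_eq_getElem hi
      rcases hps : ps[i]'hi with ⟨c', u'⟩
      rw [hps] at hlabi
      cases u' with
      | some r =>
        exact absurd (by simpa using hwf (α ++ [i]) c' r hlabi) hinfi
      | none =>
        exact ⟨α ++ [i], c', by simp [hlen], hlabi, hinfi⟩
end

section
/- A judgement c ⇒ r is inductively derivable in the big-step rules Rules if and only if, starting from the initial partial evaluation tree consisting of the single node c ⇒ ?, there is a finite sequence of transition steps reaching a partial evaluation tree whose root is labelled c ⇒ r. -/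
/-- The single-node tree. -/
def leafT {L : Type} (l : L) : OTree L where
  label α := if α = [] then some l else none
  root_isSome := by simp
  pref := by
    intro α n h
    simp at h
  sib := by
    intro α n k h _
    simp at h

/-- The tree with root label `l` and ordered list of immediate subtrees `ts`. -/
def nodeT {L : Type} (l : L) (ts : List (OTree L)) : OTree L where
  label α :=
    match α with
    | [] => some l
    | i :: β => (ts[i]?).bind fun t => t.label β
  root_isSome := by simp
  pref := by
    intro α n h
    match α with
    | [] => rfl
    | i :: β =>
      replace h : (ts[i]?.bind fun t => t.label (β ++ [n])).isSome = true := h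
      show (ts[i]?.bind fun t => t.label β).isSome = true
      rcases hts : ts[i]? with _ | t
      · rw [hts] at h; simp at h
      · rw [hts] at h
        simpa using t.pref β n (by simpa using h)
  sib := by
    intro α n k h hk
    match α with
    | [] =>
      replace h : (ts[n]?.bind fun t => t.label []).isSome = true := h
      show (ts[k]?.bind fun t => t.label []).isSome = true
      rcases hts : ts[n]? with _ | t
      · rw [hts] at h; simp at h
      · have hn : n < ts.length := by
          by_contra hc
          rw [List.getElem?_eq_none (by omega)] at hts
          cases hts
        have hk' : k < ts.length := lt_of_le_of_lt hk hn
        rw [List.getElem?_eq_getElem hk']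
        simpa using (ts[k]'hk').root_isSome
    | i :: β =>
      replace h : (ts[i]?.bind fun t => t.label (β ++ [n])).isSome = true := h
      show (ts[i]?.bind fun t => t.label (β ++ [k])).isSome = true
      rcases hts : ts[i]? with _ | t
      · rw [hts] at h; simp at h
      · rw [hts] at h
        simpa using t.sib β n k (by simpa using h) hk

/-- The transition relation on (finite) partial evaluation trees. -/
inductive Step {C R : Type} (Rules : Set (List (C × R) × (C × R))) :
    OTree (Judg C R) → OTree (Judg C R) → Prop where
  | tr1 (c : C) (r : R) (h : ([], (c, r)) ∈ Rules) :
      Step Rules (leafT (c, none)) (leafT (c, some r))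
  | tr2 (js : List (C × R)) (c : C) (res : R) (hne : js ≠ [])
      (h : (js, (c, res)) ∈ Rules) :
      Step Rules (leafT (c, none))
        (nodeT (c, none) [leafT ((js.head hne).1, none)])
  | tr3 (js : List (C × R)) (c : C) (res : R) (trs : List (OTree (Judg C R)))
      (h : (js, (c, res)) ∈ Rules) (hlen : trs.length = js.length)
      (hroots : ∀ (k : ℕ) (hk : k < js.length),
        ∃ (t : OTree (Judg C R)), trs[k]? = some t ∧
          t.label [] = some (liftJ (js[k]'hk))) :
      Step Rules (nodeT (c, none) trs) (nodeT (c, some res) trs)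
  | tr4 (js : List (C × R)) (c : C) (res : R) (trs : List (OTree (Judg C R)))
      (h : (js, (c, res)) ∈ Rules) (hne : trs ≠ [])
      (hlt : trs.length < js.length)
      (hroots : ∀ (k : ℕ) (hk : k < trs.length),
        ∃ (t : OTree (Judg C R)), trs[k]? = some t ∧
          t.label [] = some (liftJ (js[k]'(Nat.lt_trans hk hlt)))) :
      Step Rules (nodeT (c, none) trs)
        (nodeT (c, none) (trs ++ [leafT ((js[trs.length]'hlt).1, none)]))
  | tr5 (js : List (C × R)) (c : C) (res : R) (trs : List (OTree (Judg C R)))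
      (t t' : OTree (Judg C R))
      (h : (js, (c, res)) ∈ Rules)
      (hlt : trs.length < js.length)
      (hroots : ∀ (k : ℕ) (hk : k < trs.length),
        ∃ (s : OTree (Judg C R)), trs[k]? = some s ∧
          s.label [] = some (liftJ (js[k]'(Nat.lt_trans hk hlt))))
      (hconf : t.label [] = some ((js[trs.length]'hlt).1, none))
      (hstep : Step Rules t t') :
      Step Rules (nodeT (c, none) (trs ++ [t])) (nodeT (c, none) (trs ++ [t']))

section Aux

variable {C R : Type} {Rules : Set (List (C × R) × (C × R))}

@[simp] lemma leafT_label {L : Type} (l : L) (α : List ℕ) :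
    (leafT l).label α = if α = [] then some l else none := rfl

@[simp] lemma nodeT_label_nil {L : Type} (l : L) (ts : List (OTree L)) :
    (nodeT l ts).label [] = some l := rfl

@[simp] lemma nodeT_label_cons {L : Type} (l : L) (ts : List (OTree L)) (i : ℕ) (β : List ℕ) :
    (nodeT l ts).label (i :: β) = ts[i]?.bind fun t => t.label β := rfl

lemma step_roots {s s' : OTree (Judg C R)} (h : Step Rules s s') :
    ∃ d : C, s.label [] = some (d, none) ∧ ∃ u : Option R, s'.label [] = some (d, u) := by
  cases h <;> exact ⟨_, rfl, _, rfl⟩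

/-- Once the root is complete, no further step is possible. -/
lemma chain_complete_eq {v t : OTree (Judg C R)} (hchain : Relation.ReflTransGen (Step Rules) v t)
    {d : C} {r : R} (hv : v.label [] = some (d, some r)) : t = v := by
  rcases (Relation.ReflTransGen.cases_head hchain) with rfl | ⟨w, hw, _⟩
  · rfl
  · obtain ⟨d', hd', _⟩ := step_roots hw
    rw [hv] at hd'
    simp at hd'

/-- Lift a chain of steps on the last subtree to the whole tree via `tr5`. -/
lemma lift_chain (js : List (C × R)) (c : C) (res : R) (trs : List (OTree (Judg C R)))
    (h : (js, (c, res)) ∈ Rules) (hlt : trs.length < js.length)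
    (hroots : ∀ (k : ℕ) (hk : k < trs.length),
        ∃ (s : OTree (Judg C R)), trs[k]? = some s ∧
          s.label [] = some (liftJ (js[k]'(Nat.lt_trans hk hlt))))
    {u t : OTree (Judg C R)} (hchain : Relation.ReflTransGen (Step Rules) u t)
    (hconf : u.label [] = some ((js[trs.length]'hlt).1, none)) :
    Relation.ReflTransGen (Step Rules) (nodeT (c, none) (trs ++ [u])) (nodeT (c, none) (trs ++ [t])) := by
  induction hchain using Relation.ReflTransGen.head_induction_on with
  | refl => exact Relation.ReflTransGen.refl
  | head hstep hrest ih =>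
    rename_i a b
    have h1 : Step Rules (nodeT (c, none) (trs ++ [a])) (nodeT (c, none) (trs ++ [b])) :=
      Step.tr5 js c res trs a b h hlt hroots hconf hstep
    obtain ⟨d, hd, v, hv⟩ := step_roots hstep
    rw [hconf] at hd
    obtain ⟨rfl, -⟩ : d = (js[trs.length]'hlt).1 ∧ (none : Option R) = none := by
      injection hd with hd; exact ⟨congrArg Prod.fst hd.symm, rfl⟩
    rcases v with _ | r'
    · exact Relation.ReflTransGen.head h1 (ih hv)
    · have := chain_complete_eq hrest hv
      subst this
      exact Relation.ReflTransGen.head h1 Relation.ReflTransGen.refl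

/-- Forward: build a chain for each `k ≤ ps.length` premises, then complete. -/
lemma fwd_aux (ps : List (C × R)) (c : C) (r : R) (hr : (ps, (c, r)) ∈ Rules)
    (T : ∀ k, (hk : k < ps.length) → OTree (Judg C R))
    (hT : ∀ k (hk : k < ps.length),
      Relation.ReflTransGen (Step Rules) (leafT ((ps[k]'hk).1, none)) (T k hk) ∧
      (T k hk).label [] = some (liftJ (ps[k]'hk))) :
    ∀ n, 1 ≤ n → (hn : n ≤ ps.length) →
      ∃ trs : List (OTree (Judg C R)), trs.length = n ∧
        (∀ k (hk : k < n), trs[k]? = some (T k (lt_of_lt_of_le hk hn)) ) ∧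
        Relation.ReflTransGen (Step Rules) (leafT (c, none)) (nodeT (c, none) trs) := by
  intro n
  induction n with
  | zero => omega
  | succ m ih =>
    intro _ hn
    have hroots : ∀ (trs : List (OTree (Judg C R))) (hlen : trs.length ≤ ps.length),
        (∀ k (hk : k < trs.length), trs[k]? = some (T k (lt_of_lt_of_le hk hlen))) →
        ∀ k (hk : k < trs.length),
          ∃ s : OTree (Judg C R), trs[k]? = some s ∧
            s.label [] = some (liftJ (ps[k]'(Nat.lt_of_lt_of_le hk hlen))) := by
      intro trs hlen hget k hk
      exact ⟨T k (lt_of_lt_of_le hk hlen), hget k hk, (hT k _).2⟩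
    rcases Nat.eq_or_lt_of_le (Nat.one_le_iff_ne_zero.mpr (by omega) : 1 ≤ m + 1) with h1 | h1
    · -- m = 0 : first child
      obtain rfl : m = 0 := by omega
      have h0 : 0 < ps.length := by omega
      have hne : ps ≠ [] := List.ne_nil_of_length_pos h0
      have hhead : (ps.head hne) = ps[0]'h0 := by
        cases ps with
        | nil => exact absurd rfl hne
        | cons a l => rfl
      have s1 : Step Rules (leafT (c, none))
          (nodeT (c, none) [leafT ((ps.head hne).1, none)]) :=
        Step.tr2 ps c r hne hr
      rw [hhead] at s1
      have s2 := lift_chain (trs := ([] : List (OTree (Judg C R)))) ps c r hr h0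
        (by intro k hk; simp at hk) (hT 0 h0).1 (by simp)
      refine ⟨[T 0 h0], rfl, ?_, ?_⟩
      · intro k hk
        interval_cases k
        rfl
      · exact Relation.ReflTransGen.head s1 (by simpa using s2)
    · -- m ≥ 1
      have hm : m ≤ ps.length := by omega
      have hmlt : m < ps.length := by omega
      obtain ⟨trs, hlen, hget, hchain⟩ := ih (by omega) hm
      have hget' : ∀ k (hk : k < trs.length), trs[k]? = some (T k (lt_of_lt_of_le hk (hlen ▸ hm))) := by
        intro k hk
        exact hget k (hlen ▸ hk)
      have hlt : trs.length < ps.length := by omega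
      have hroots' := hroots trs (le_of_lt hlt) hget'
      have s1 : Step Rules (nodeT (c, none) trs)
          (nodeT (c, none) (trs ++ [leafT ((ps[trs.length]'hlt).1, none)])) :=
        Step.tr4 ps c r trs hr (by
          intro hnil; rw [hnil] at hlen; simp at hlen; omega) hlt (by
          intro k hk
          exact hroots' k hk)
      have s2 := lift_chain ps c r trs hr hlt hroots'
        (u := leafT ((ps[trs.length]'hlt).1, none)) (t := T trs.length hlt)
        ((hT trs.length hlt).1) (by simp)
      refine ⟨trs ++ [T trs.length hlt], by simp [hlen], ?_, ?_⟩
      · intro k hk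
        rcases Nat.lt_or_ge k trs.length with hk' | hk'
        · rw [List.getElem?_append_left hk']
          exact hget' k hk'
        · have : k = trs.length := by omega
          subst this
          simp
      · exact hchain.trans (Relation.ReflTransGen.head s1 s2)

lemma fwd {j : C × R} (h : IndDerives Rules j) :
    ∃ t : OTree (Judg C R),
      Relation.ReflTransGen (Step Rules) (leafT (j.1, none)) t ∧
      t.label [] = some (liftJ j) := by
  induction h with
  | node ps j hr _ ih =>
    obtain ⟨c, r⟩ := j
    rcases List.eq_nil_or_concat ps with rfl | hps
    · exact ⟨leafT (c, some r), Relation.ReflTransGen.single (Step.tr1 c r hr), by simp [liftJ]⟩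
    · have hlen : 1 ≤ ps.length := by
        obtain ⟨l, a, rfl⟩ := hps; simp
      choose T hT1 hT2 using fun k (hk : k < ps.length) =>
        ih (ps[k]'hk) (List.getElem_mem hk)
      obtain ⟨trs, hl, hget, hchain⟩ :=
        fwd_aux ps c r hr T (fun k hk => ⟨hT1 k hk, hT2 k hk⟩) ps.length hlen le_rfl
      refine ⟨nodeT (c, some r) trs, ?_, by simp [liftJ]⟩
      refine hchain.tail (Step.tr3 ps c r trs hr hl ?_)
      intro k hk
      exact ⟨T k hk, hget k (hl ▸ hk), hT2 k hk⟩
/-- Invariant: every complete node in the tree is inductively derivable. -/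
def Good (Rules : Set (List (C × R) × (C × R))) (t : OTree (Judg C R)) : Prop :=
  ∀ α (c : C) (r : R), t.label α = some (c, some r) → IndDerives Rules (c, r)

lemma step_good {s s' : OTree (Judg C R)} (h : Step Rules s s') (hg : Good Rules s) :
    Good Rules s' := by
  induction h with
  | tr1 c r hr =>
    intro α c' r' hl
    simp only [leafT_label] at hl
    split at hl
    · obtain ⟨rfl, rfl⟩ : c = c' ∧ r = r' := by
        injection hl with hl
        exact ⟨congrArg Prod.fst hl, by injection (congrArg Prod.snd hl)⟩
      exact IndDerives.node [] _ hr (by simp)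
    · exact absurd hl (by simp)
  | tr2 js c res hne hr =>
    intro α c' r' hl
    match α with
    | [] => simp at hl
    | i :: β =>
      simp only [nodeT_label_cons] at hl
      match i with
      | 0 =>
        simp only [List.getElem?_cons_zero, Option.bind_some, leafT_label] at hl
        split at hl <;> simp_all
      | (k+1) => simp at hl
  | tr3 js c res trs hr hlen hroots =>
    intro α c' r' hl
    match α with
    | [] =>
      simp only [nodeT_label_nil, Option.some.injEq] at hl
      obtain ⟨rfl, rfl⟩ : c = c' ∧ res = r' := by
        exact ⟨congrArg Prod.fst hl, by injection (congrArg Prod.snd hl)⟩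
      refine IndDerives.node js (c, res) hr ?_
      intro p hp
      obtain ⟨k, hk, rfl⟩ := List.mem_iff_getElem.mp hp
      obtain ⟨t, ht, hroot⟩ := hroots k hk
      have := hg (k :: []) (js[k]'hk).1 (js[k]'hk).2 (by
        simp only [nodeT_label_cons, ht, Option.bind_some, hroot, liftJ])
      simpa using this
    | i :: β =>
      exact hg (i :: β) c' r' hl
  | tr4 js c res trs hr hne hlt hroots =>
    intro α c' r' hl
    match α with
    | [] => simp at hl
    | i :: β =>
      simp only [nodeT_label_cons] at hl
      rcases Nat.lt_trichotomy i trs.length with hi | hi | hi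
      · rw [List.getElem?_append_left hi] at hl
        exact hg (i :: β) c' r' (by simpa using hl)
      · subst hi
        rw [List.getElem?_concat_length] at hl
        simp only [Option.bind_some, leafT_label] at hl
        split at hl <;> simp_all
      · rw [List.getElem?_eq_none (by simp only [List.length_append, List.length_cons, List.length_nil]; omega)] at hl
        simp at hl
  | tr5 js c res trs t t' hr hlt hroots hconf hstep ih =>
    have hgt : Good Rules t := by
      intro β c' r' hb
      exact hg (trs.length :: β) c' r' (by
        simp only [nodeT_label_cons, List.getElem?_concat_length, Option.bind_some, hb])
    have hgt' := ih hgt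
    intro α c' r' hl
    match α with
    | [] => simp at hl
    | i :: β =>
      simp only [nodeT_label_cons] at hl
      rcases Nat.lt_trichotomy i trs.length with hi | hi | hi
      · rw [List.getElem?_append_left hi] at hl
        exact hg (i :: β) c' r' (by
          simp only [nodeT_label_cons]
          rw [List.getElem?_append_left hi]
          exact hl)
      · subst hi
        rw [List.getElem?_concat_length] at hl
        exact hgt' β c' r' (by simpa using hl)
      · rw [List.getElem?_eq_none (by simp only [List.length_append, List.length_cons, List.length_nil]; omega)] at hl
        simp at hl

lemma chain_good {s t : OTree (Judg C R)} (h : Relation.ReflTransGen (Step Rules) s t)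
    (hg : Good Rules s) : Good Rules t := by
  induction h with
  | refl => exact hg
  | tail _ hstep ih => exact step_good hstep ih

end Aux

/-- `c ⇒ r` is inductively derivable iff from the initial
    partial evaluation tree with single node `c ⇒ ?` one reaches, in finitely
    many transition steps, a tree whose root is labelled `c ⇒ r`. -/
theorem derives_iff_reachable {C R : Type}
    (Rules : Set (List (C × R) × (C × R))) (c : C) (r : R) :
    IndDerives Rules (c, r) ↔
      ∃ t : OTree (Judg C R),
        Relation.ReflTransGen (Step Rules) (leafT (c, none)) t ∧
        t.label [] = some (c, some r) := by
  constructor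
  · intro h
    obtain ⟨t, hc, hr⟩ := fwd h
    exact ⟨t, hc, hr⟩
  · rintro ⟨t, hchain, hroot⟩
    refine chain_good hchain ?_ [] c r hroot
    intro α c' r' hl
    simp only [leafT_label] at hl
    split at hl <;> simp_all
end

section
/- In the trace-extended big-step semantics, a judgement c ⇒ (σ, r), with σ a finite trace and r a result, is coinductively derivable if and only if it is inductively derivable (allowing infinite derivations does not add finite-trace judgements). -/
/-- Trace results: a finite trace paired with a result, or an infinite trace. -/
abbrev TrRes (C R : Type) := (List C × R) ⊕ Stream' C

/-- The trace-extended rule set `Rules_tr`: finite-trace rules and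
    infinite-trace rules. -/
def RulesTr {C R : Type} (Rules : Set (List (C × R) × (C × R))) :
    Set (List (C × TrRes C R) × (C × TrRes C R)) :=
  { r | (∃ (js : List (C × R)) (c : C) (res : R) (σs : List (List C)),
          (js, (c, res)) ∈ Rules ∧ σs.length = js.length ∧
          r = ((js.zip σs).map (fun p => (p.1.1, Sum.inl (p.2, p.1.2))),
               (c, Sum.inl (c :: σs.flatten, res))))
      ∨ (∃ (js : List (C × R)) (c : C) (res : R) (i : ℕ) (hi : i < js.length)
            (σs : List (List C)) (σ : Stream' C),
          (js, (c, res)) ∈ Rules ∧ σs.length = i ∧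
          r = (((js.take i).zip σs).map (fun p => (p.1.1, Sum.inl (p.2, p.1.2))) ++
                 [((js[i]'hi).1, Sum.inr σ)],
               (c, Sum.inr ((c :: σs.flatten) ++ₛ σ)))) }

/-- Equality of rules up to an index `i`: same conclusion configuration, same
    first `i` premises, same configuration in the `(i+1)`-th premise
    (`i` is 0-based here), with a prescribed result `r'` in that premise. -/
def AgreeUpTo {C R : Type} (Rules : Set (List (C × R) × (C × R)))
    (js : List (C × R)) (c : C) (i : ℕ) (hi : i < js.length) (r' : R) : Prop :=
  ∃ (js' : List (C × R)) (res' : R) (hi' : i < js'.length),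
    (js', (c, res')) ∈ Rules ∧ js'.take i = js.take i ∧
    (js'[i]'hi').1 = (js[i]'hi).1 ∧ (js'[i]'hi').2 = r'

/-- The wrong-extended rule set `Rules_wr` over results `R + {wrong}`
    (`none` stands for `wrong`): original rules, wrong-configuration axioms,
    wrong-result rules and wrong-propagation rules. -/
def RulesWr {C R : Type} (Rules : Set (List (C × R) × (C × R))) :
    Set (List (Judg C R) × Judg C R) :=
  { r | (∃ (js : List (C × R)) (c : C) (res : R),
          (js, (c, res)) ∈ Rules ∧ r = (js.map liftJ, (c, some res)))
      ∨ (∃ (c : C), (¬ ∃ (js : List (C × R)) (res : R), (js, (c, res)) ∈ Rules) ∧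
          r = ([], (c, none)))
      ∨ (∃ (js : List (C × R)) (c : C) (res : R) (i : ℕ) (hi : i < js.length) (r' : R),
          (js, (c, res)) ∈ Rules ∧ ¬ AgreeUpTo Rules js c i hi r' ∧
          r = ((js.take i).map liftJ ++ [((js[i]'hi).1, some r')], (c, none)))
      ∨ (∃ (js : List (C × R)) (c : C) (res : R) (i : ℕ) (hi : i < js.length),
          (js, (c, res)) ∈ Rules ∧
          r = ((js.take i).map liftJ ++ [((js[i]'hi).1, none)], (c, none))) }

/-- The divergence-extended rule set `Rules_∞` over results `R + {∞}`
    (`none` stands for `∞`): original rules plus divergence-propagation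
    rules. -/
def RulesInf {C R : Type} (Rules : Set (List (C × R) × (C × R))) :
    Set (List (Judg C R) × Judg C R) :=
  { r | (∃ (js : List (C × R)) (c : C) (res : R),
          (js, (c, res)) ∈ Rules ∧ r = (js.map liftJ, (c, some res)))
      ∨ (∃ (js : List (C × R)) (c : C) (res : R) (i : ℕ) (hi : i < js.length),
          (js, (c, res)) ∈ Rules ∧
          r = ((js.take i).map liftJ ++ [((js[i]'hi).1, none)], (c, none))) }

/-- The coaxioms for divergence: `c ⇒ ∞` for every configuration `c`. -/
def CoAx (C R : Type) : Set (List (Judg C R) × Judg C R) :=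
  { r | ∃ (c : C), r = ([], (c, none)) }

/-- The trace-forgetting map: `(σ, r) ↦ r` and `σ^∞ ↦ ∞`. -/
def uForget {C R : Type} : TrRes C R → Option R :=
  Sum.elim (fun p => some p.2) (fun _ => none)

/-- in the trace-extended semantics, finite-trace judgements are
    coinductively derivable iff they are inductively derivable. -/
theorem trace_finite_co_iff_ind {C R : Type}
    (Rules : Set (List (C × R) × (C × R))) (c : C) (σ : List C) (r : R) :
    CoDerives (RulesTr Rules) (c, Sum.inl (σ, r)) ↔
      IndDerives (RulesTr Rules) (c, Sum.inl (σ, r)) := by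

  constructor
  · rintro ⟨X, hX, hmem⟩
    suffices h : ∀ n c σ (r : R), σ.length < n → (c, Sum.inl (σ, r)) ∈ X →
        IndDerives (RulesTr Rules) (c, Sum.inl (σ, r)) from
      h (σ.length + 1) c σ r (Nat.lt_succ_self _) hmem
    intro n
    induction n with
    | zero => intro c σ r h; omega
    | succ n ih =>
      intro c σ r hlen hx
      obtain ⟨ps, hrule, hps⟩ := hX _ hx
      have hrule' := hrule
      rcases hrule' with ⟨js, c', res, σs, hjs, hσlen, heq⟩ |
        ⟨js, c', res, i, hi, σs, sinf, hjs, hσlen, heq⟩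
      · simp only [Prod.mk.injEq, Sum.inl.injEq] at heq
        obtain ⟨hpseq, hceq, hσeq, hreq⟩ := heq
        refine IndDerives.node ps _ hrule ?_
        intro p hp
        subst hpseq
        rw [List.mem_map] at hp
        obtain ⟨q, hq, hpq⟩ := hp
        have hq2 : q.2 ∈ σs := (List.of_mem_zip hq).2
        have hle : q.2.length ≤ σs.flatten.length := by
          rw [List.length_flatten]
          exact List.single_le_sum (fun x _ => Nat.zero_le x) _ (List.mem_map_of_mem hq2)
        have hlt : q.2.length < n := by
          have : σ.length = σs.flatten.length + 1 := by rw [hσeq]; simp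
          omega
        have := ih q.1.1 q.2 q.1.2 hlt (by
          have := hps _ (List.mem_map_of_mem hq)
          simpa using this)
        rw [← hpq]
        exact this
      · simp at heq
  · intro h
    refine ⟨{j | IndDerives (RulesTr Rules) j}, ?_, h⟩
    rintro j hj
    rcases hj with ⟨ps, j, hr, hsub⟩
    exact ⟨ps, hr, hsub⟩
end

section
/- In the trace-extended big-step semantics, c ⇒ (σ, r) is coinductively derivable for some finite trace σ if and only if c ⇒ r is inductively derivable in the original big-step rules (the trace construction is conservative over convergence). -/
private theorem indDerives_coDerives {J : Type} (Rules : Set (List J × J)) (j : J)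
    (h : IndDerives Rules j) : CoDerives Rules j := by
  refine ⟨{j | IndDerives Rules j}, ?_, h⟩
  rintro x ⟨ps, x, hr, hp⟩
  exact ⟨ps, hr, hp⟩

private theorem tr_forward {C R : Type} (Rules : Set (List (C × R) × (C × R))) :
    ∀ (n : ℕ) (σ : List C), σ.length ≤ n → ∀ (X : Set (C × TrRes C R)),
      ConsistentL (RulesTr Rules) X → ∀ (c : C) (r : R),
      (c, Sum.inl (σ, r)) ∈ X → IndDerives Rules (c, r) := by
  intro n
  induction n using Nat.strong_induction_on with
  | _ n ih =>
    intro σ hσ X hX c r hmem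
    obtain ⟨ps, hrule, hprem⟩ := hX _ hmem
    rcases hrule with ⟨js, c', res, σs, hR, hlen, heq⟩ |
      ⟨js, c', res, i, hi, σs, σ', hR, hlen, heq⟩
    · obtain ⟨hps, hconc⟩ := Prod.mk.injEq .. ▸ heq
      obtain ⟨hc, hres⟩ := Prod.mk.injEq .. ▸ hconc
      have hσr := Sum.inl.inj hres
      obtain ⟨hσeq, hreq⟩ := Prod.mk.injEq .. ▸ hσr
      subst hc hreq hps hσeq
      refine IndDerives.node js (c, r) hR ?_
      intro j hj
      obtain ⟨k, hk, hkeq⟩ := List.mem_iff_getElem.mp hj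
      have hkz : k < (js.zip σs).length := by
        rw [List.length_zip, hlen]; omega
      have hkσ : k < σs.length := by rw [hlen]; exact hk
      have hpmem : ((js[k].1, Sum.inl (σs[k], js[k].2)) : C × TrRes C R) ∈
          (js.zip σs).map (fun p => (p.1.1, Sum.inl (p.2, p.1.2))) := by
        refine List.mem_iff_getElem.mpr ⟨k, by simpa using hkz, ?_⟩
        simp [List.getElem_zip]
      have hin : ((js[k].1, Sum.inl (σs[k], js[k].2)) : C × TrRes C R) ∈ X :=
        hprem _ hpmem
      have hlt : σs[k].length < n := by
        have h1 : σs[k].length ≤ σs.flatten.length := by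
          have : σs[k] ∈ σs := List.getElem_mem hkσ
          calc σs[k].length ≤ (σs.map List.length).sum :=
                List.single_le_sum (by simp) _ (List.mem_map_of_mem this)
            _ = σs.flatten.length := List.length_flatten.symm
        have h2 : σs.flatten.length < (c :: σs.flatten).length := by simp
        omega
      have := ih σs[k].length hlt σs[k] le_rfl X hX js[k].1 js[k].2 hin
      rwa [hkeq] at this
    · exact absurd (congrArg (fun p => p.2.2) heq) (by simp)

private theorem tr_backward {C R : Type} (Rules : Set (List (C × R) × (C × R)))
    (j : C × R) (h : IndDerives Rules j) :
    ∃ σ : List C, IndDerives (RulesTr Rules) (j.1, Sum.inl (σ, j.2)) := by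
  induction h with
  | node ps j hr hprem ih =>
    choose f hf using ih
    set σs : List (List C) := ps.attach.map (fun x => f x.1 x.2) with hσs
    have hlen : σs.length = ps.length := by simp [hσs]
    refine ⟨j.1 :: σs.flatten, ?_⟩
    refine IndDerives.node ((ps.zip σs).map (fun p => (p.1.1, Sum.inl (p.2, p.1.2))))
      _ ?_ ?_
    · exact Or.inl ⟨ps, j.1, j.2, σs, by simpa using hr, hlen, rfl⟩
    · intro q hq
      obtain ⟨k, hk, hkeq⟩ := List.mem_iff_getElem.mp hq
      have hkz : k < (ps.zip σs).length := by simpa using hk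
      have hkp : k < ps.length := by rw [List.length_zip, hlen] at hkz; omega
      have hkσ : k < σs.length := by rw [hlen]; exact hkp
      have hq2 : q = (ps[k].1, Sum.inl (σs[k], ps[k].2)) := by
        rw [← hkeq]; simp [List.getElem_zip]
      have hσk : σs[k] = f ps[k] (List.getElem_mem hkp) := by
        simp [hσs]
      rw [hq2, hσk]
      exact hf ps[k] (List.getElem_mem hkp)

/-- the trace construction is conservative over convergence. -/
theorem trace_conservative {C R : Type}
    (Rules : Set (List (C × R) × (C × R))) (c : C) (r : R) :
    (∃ σ : List C, CoDerives (RulesTr Rules) (c, Sum.inl (σ, r))) ↔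
      IndDerives Rules (c, r) := by
  constructor
  · rintro ⟨σ, X, hX, hmem⟩
    exact tr_forward Rules σ.length σ le_rfl X hX c r hmem
  · intro h
    obtain ⟨σ, hσ⟩ := tr_backward Rules (c, r) h
    exact ⟨σ, indDerives_coDerives _ _ hσ⟩
end

section
/- Let S ⊆ C be a set of configurations such that for every c ∈ S there exist a rule ρ with conclusion configuration c, premises j_1,…,j_n, and an index i ∈ 1..n such that j_k is inductively derivable for all k < i and the configuration of j_i belongs to S. Then for every c ∈ S there exists an infinite trace σ^∞ such that c ⇒ σ^∞ is coinductively derivable in the trace-extended rules. -/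
lemma list_skolem {α β : Type} {P : α → β → Prop} :
    ∀ (l : List α), (∀ p ∈ l, ∃ b, P p b) →
      ∃ bs : List β, ∃ hlen : bs.length = l.length,
        ∀ (k : ℕ) (hk : k < l.length), P (l[k]'hk) (bs[k]'(hlen ▸ hk))
  | [], _ => ⟨[], rfl, fun k hk => absurd hk (by simp)⟩
  | a :: l, h => by
    obtain ⟨b, hb⟩ := h a List.mem_cons_self
    obtain ⟨bs, hlen, hbs⟩ := list_skolem l (fun p hp => h p (List.mem_cons_of_mem _ hp))
    exact ⟨b :: bs, by simp [hlen], fun k hk => by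
      cases k with
      | zero => exact hb
      | succ k => exact hbs k (by simpa using hk)⟩

lemma ind_trace {C R : Type} (Rules : Set (List (C × R) × (C × R))) :
    ∀ j : C × R, IndDerives Rules j →
      ∃ σ : List C, IndDerives (RulesTr Rules) (j.1, Sum.inl (σ, j.2)) := by
  intro j hj
  induction hj with
  | node ps j hr hps ih =>
    obtain ⟨σs, hlen, hσs⟩ := list_skolem ps ih
    refine ⟨j.1 :: σs.flatten, IndDerives.node
      ((ps.zip σs).map (fun p => (p.1.1, Sum.inl (p.2, p.1.2))))
      (j.1, Sum.inl (j.1 :: σs.flatten, j.2)) ?_ ?_⟩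
    · exact Or.inl ⟨ps, j.1, j.2, σs, hr, hlen, rfl⟩
    · intro p hp
      rw [List.mem_iff_getElem] at hp
      obtain ⟨k, hk, hpk⟩ := hp
      have hk' : k < ps.length := by
        simpa [Nat.lt_min, hlen] using hk
      rw [List.getElem_map, List.getElem_zip] at hpk
      subst hpk
      exact hσs k hk'

/-- coinductive proof principle for divergence in the trace
    semantics. -/
theorem trace_divergence_principle {C R : Type}
    (Rules : Set (List (C × R) × (C × R))) (hbp : BP Rules) (S : Set C)
    (h : ∀ c ∈ S, ∃ (js : List (C × R)) (res : R) (i : ℕ) (hi : i < js.length),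
      (js, (c, res)) ∈ Rules ∧
      (∀ (k : ℕ) (hk : k < i), IndDerives Rules (js[k]'(Nat.lt_trans hk hi))) ∧
      (js[i]'hi).1 ∈ S) :
    ∀ c ∈ S, ∃ σ : Stream' C, CoDerives (RulesTr Rules) (c, Sum.inr σ) := by
  classical
  choose js res i hi hmem hind hnext using fun s : ↥S => h s.1 s.2
  have hprem : ∀ s : ↥S, ∀ p ∈ (js s).take (i s),
      ∃ σ : List C, IndDerives (RulesTr Rules) (p.1, Sum.inl (σ, p.2)) := by
    intro s p hp
    rw [List.mem_iff_getElem] at hp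
    obtain ⟨k, hk, hpk⟩ := hp
    have hki : k < i s := (by simpa [List.length_take, Nat.lt_min] using hk : _ ∧ _).1
    rw [List.getElem_take] at hpk
    subst hpk
    exact ind_trace Rules _ (hind s k hki)
  choose σs hlen hσ using fun s : ↥S => list_skolem ((js s).take (i s)) (hprem s)
  have hleni : ∀ s : ↥S, (σs s).length = i s := by
    intro s
    rw [hlen s, List.length_take]
    exact Nat.min_eq_left (Nat.le_of_lt (hi s))
  set nxt : ↥S → ↥S := fun s => ⟨((js s)[i s]'(hi s)).1, hnext s⟩ with hnxt
  set outp : List C × ↥S → C := fun p => match p.1 with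
    | [] => p.2.1
    | x :: _ => x with houtp
  set adv : List C × ↥S → List C × ↥S := fun p => match p.1 with
    | [] => ((σs p.2).flatten, nxt p.2)
    | _ :: rest => (rest, p.2) with hadv
  set τ : ↥S → Stream' C := fun s => Stream'.corec outp adv ([], s) with hτ
  have keyA : ∀ (buf : List C) (s : ↥S),
      Stream'.corec outp adv (buf, s) = buf ++ₛ Stream'.corec outp adv ([], s) := by
    intro buf
    induction buf with
    | nil => intro s; rw [Stream'.nil_append_stream]
    | cons x rest ih =>
      intro s
      rw [Stream'.corec_eq, Stream'.cons_append_stream]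
      exact congrArg (Stream'.cons x) (ih s)
  have keyB : ∀ s : ↥S, τ s = ((s : C) :: (σs s).flatten) ++ₛ τ (nxt s) := by
    intro s
    rw [hτ]
    simp only
    rw [Stream'.corec_eq, Stream'.cons_append_stream]
    exact congrArg (Stream'.cons _) (keyA _ _)
  intro c0 hc0
  refine ⟨τ ⟨c0, hc0⟩,
    { j | IndDerives (RulesTr Rules) j } ∪ { j | ∃ s : ↥S, j = ((s : C), Sum.inr (τ s)) },
    ?_, Or.inr ⟨⟨c0, hc0⟩, rfl⟩⟩
  rintro j (hj | ⟨s, rfl⟩)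
  · obtain ⟨ps, j, hr, hps⟩ := hj
    exact ⟨ps, hr, fun p hp => Or.inl (hps p hp)⟩
  · refine ⟨((((js s).take (i s)).zip (σs s)).map
        (fun p => (p.1.1, Sum.inl (p.2, p.1.2)))) ++ [(((js s)[i s]'(hi s)).1, Sum.inr (τ (nxt s)))],
      Or.inr ⟨js s, s.1, res s, i s, hi s, σs s, τ (nxt s), hmem s, hleni s, ?_⟩, ?_⟩
    · refine Prod.ext rfl (Prod.ext rfl ?_)
      simp only
      rw [keyB s]
    · intro p hp
      rw [List.mem_append] at hp
      rcases hp with hp | hp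
      · rw [List.mem_iff_getElem] at hp
        obtain ⟨k, hk, hpk⟩ := hp
        have hk' : k < ((js s).take (i s)).length := by
          simpa [Nat.lt_min, hlen s] using hk
        rw [List.getElem_map, List.getElem_zip] at hpk
        subst hpk
        exact Or.inl (hσ s k hk')
      · rw [List.mem_singleton] at hp
        subst hp
        exact Or.inr ⟨nxt s, rfl⟩
end
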